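/- Let H be a real inner product space. For all a, b ∈ H one has (‖a‖² − ‖b‖²)·⟪b, a − b⟫ ≥ (1/2)(‖a‖² − ‖b‖²)² − (1/2)‖a‖²‖a − b‖². -/

import Mathlib

theorem key_intermediate_inequality {H : Type*} [NormedAddCommGroup H] [InnerProductSpace ℝ H]
    (a b : H) :
    (‖a‖ ^ 2 - ‖b‖ ^ 2) * (inner ℝ b (a - b) : ℝ) ≥
      (1 / 2) * (‖a‖ ^ 2 - ‖b‖ ^ 2) ^ 2 - (1 / 2) * ‖a‖ ^ 2 * ‖a - b‖ ^ 2 := by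
  have h1 : (inner ℝ b (a - b) : ℝ) = inner ℝ b a - ‖b‖ ^ 2 := by
    rw [inner_sub_right, real_inner_self_eq_norm_sq]
  have h2 : ‖a - b‖ ^ 2 = ‖a‖ ^ 2 - 2 * inner ℝ a b + ‖b‖ ^ 2 := norm_sub_sq_real a b
  have h3 : (inner ℝ a b : ℝ) = inner ℝ b a := real_inner_comm b a
  have h4 : (0:ℝ) ≤ ‖b‖ ^ 2 * ‖a - b‖ ^ 2 := by positivity
  nlinarith [h4]
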